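/- arXiv:0803.1413 — 3 statements merged into one kernel-verified Lean document; each statement's English description precedes it below -/
import Mathlib

section
/- Let λ, μ : ℤ → ℝ be functions with λₙ > 0 and μₙ > 0 for all n ∈ ℤ, and let ν : ℤ → ℝ be a sequence of positive numbers satisfying ν_{n+1}·λₙ − νₙ·(λₙ + μₙ) + ν_{n−1}·μₙ = 0 for all n ∈ ℤ. Fix k ∈ ℤ and suppose p : ℤ → ℝ → ℝ is such that each t ↦ p_n(t) is differentiable on [0, ∞), satisfies the forward Kolmogorov equations d/dt p_n(t) = λ_{n−1}·p_{n−1}(t) − (λₙ + μₙ)·p_n(t) + μ_{n+1}·p_{n+1}(t) for all n ∈ ℤ and t ≥ 0, and satisfies the initial conditions p_n(0) = 1 if n = k and p_n(0) = 0 if n ≠ k. Then the functions p̃_n(t) := (νₙ/ν_k)·p_n(t) satisfy the forward Kolmogorov equations d/dt p̃_n(t) = λ̃_{n−1}·p̃_{n−1}(t) − (λ̃ₙ + μ̃ₙ)·p̃_n(t) + μ̃_{n+1}·p̃_{n+1}(t) for all n ∈ ℤ and t ≥ 0, where λ̃ₙ = λₙ·ν_{n+1}/νₙ and μ̃ₙ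 = μₙ·ν_{n−1}/νₙ, and they satisfy the same initial conditions p̃_n(0) = 1 if n = k and p̃_n(0) = 0 if n ≠ k. -/
/-- Transformation of bilateral birth-and-death transition probabilities:
if `p` solves the forward Kolmogorov equations with rates `lam`, `mu` and
delta initial condition at `k`, and `ν` is a positive solution of the
transformation condition, then `p̃ n t = (ν n / ν k) * p n t` solves the
forward Kolmogorov equations with the transformed rates
`λ̃ n = λ n * ν (n+1) / ν n`, `μ̃ n = μ n * ν (n-1) / ν n`, with the same
delta initial condition. -/
theorem bilateral_bd_transform
    (lam mu : ℤ → ℝ)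
    (hlam : ∀ n, 0 < lam n) (hmu : ∀ n, 0 < mu n)
    (nu : ℤ → ℝ) (hnu : ∀ n, 0 < nu n)
    (hcond : ∀ n : ℤ, nu (n + 1) * lam n - nu n * (lam n + mu n) + nu (n - 1) * mu n = 0)
    (k : ℤ) (p : ℤ → ℝ → ℝ)
    (hderiv : ∀ n : ℤ, ∀ t : ℝ, 0 ≤ t →
      HasDerivWithinAt (p n)
        (lam (n - 1) * p (n - 1) t - (lam n + mu n) * p n t + mu (n + 1) * p (n + 1) t)
        (Set.Ici 0) t)
    (hinit : ∀ n : ℤ, p n 0 = if n = k then 1 else 0) :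
    (∀ n : ℤ, ∀ t : ℝ, 0 ≤ t →
      HasDerivWithinAt (fun τ => nu n / nu k * p n τ)
        ((lam (n - 1) * nu (n - 1 + 1) / nu (n - 1)) * (nu (n - 1) / nu k * p (n - 1) t)
          - (lam n * nu (n + 1) / nu n + mu n * nu (n - 1) / nu n) * (nu n / nu k * p n t)
          + (mu (n + 1) * nu (n + 1 - 1) / nu (n + 1)) * (nu (n + 1) / nu k * p (n + 1) t))
        (Set.Ici 0) t) ∧
    (∀ n : ℤ, nu n / nu k * p n 0 = if n = k then 1 else 0) := by
  constructor
  · intro n t ht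
    have h := (hderiv n t ht).const_mul (nu n / nu k)
    convert h using 1 <;> try rfl
    have h1 : nu (n - 1) ≠ 0 := (hnu _).ne'
    have h2 : nu n ≠ 0 := (hnu _).ne'
    have h3 : nu (n + 1) ≠ 0 := (hnu _).ne'
    have hk : nu k ≠ 0 := (hnu _).ne'
    have hc := hcond n
    simp only [add_sub_cancel_right, sub_add_cancel]
    field_simp
    linear_combination (-(p n t)) * hc
  · intro n
    rw [hinit n]
    by_cases hn : n = k <;> simp [hn, (hnu k).ne']
end

section
/- Let λ > 0 and μ > 0 be real numbers and fix k ∈ ℤ. Define p_{k,n}(t) = e^{−(λ+μ)t} · (λ/μ)^{(n−k)/2} · I_{n−k}(2t√(λμ)) for n ∈ ℤ and t ≥ 0, where (λ/μ)^{(n−k)/2} denotes the real power with exponent (n−k)/2 and I_m is the modified Bessel function of the first kind of integer order. Then for every n ∈ ℤ the function t ↦ p_{k,n}(t) is differentiable on [0, ∞) and satisfies the forward Kolmogorov equations with constant rates, d/dt p_{k,n}(t) = λ·p_{k,n−1}(t) − (λ+μ)·p_{k,n}(t) + μ·p_{k,n+1}(t), together with the initial conditions p_{k,n}(0) = 1 if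 n = k and p_{k,n}(0) = 0 if n ≠ k. -/
/-- The modified Bessel function of the first kind of integer order `m`,
defined by the series `I_m(x) = ∑_{j ≥ max(0, -m)} (x/2)^{m+2j} / (j! (m+j)!)`;
the term is `0` when `m + j < 0`, which realizes the starting index `max(0, -m)`. -/
noncomputable def besselI (m : ℤ) (x : ℝ) : ℝ :=
  ∑' j : ℕ, if 0 ≤ m + (j : ℤ) then
      (x / 2) ^ (m + 2 * (j : ℤ)).toNat /
        ((Nat.factorial j : ℝ) * (Nat.factorial (m + (j : ℤ)).toNat : ℝ))
    else 0

noncomputable def bTerm (m : ℤ) (j : ℕ) (x : ℝ) : ℝ :=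
  if 0 ≤ m + (j : ℤ) then
      (x / 2) ^ (m + 2 * (j : ℤ)).toNat /
        ((Nat.factorial j : ℝ) * (Nat.factorial (m + (j : ℤ)).toNat : ℝ))
    else 0

noncomputable def bDeriv (m : ℤ) (j : ℕ) (x : ℝ) : ℝ :=
  if 0 ≤ m + (j : ℤ) then
      (((m + 2 * (j : ℤ)).toNat : ℝ) * (x / 2) ^ ((m + 2 * (j : ℤ)).toNat - 1) * (1 / 2)) /
        ((Nat.factorial j : ℝ) * (Nat.factorial (m + (j : ℤ)).toNat : ℝ))
    else 0

lemma besselI_eq (m : ℤ) (x : ℝ) : besselI m x = ∑' j, bTerm m j x := rfl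

lemma bTerm_hasDerivAt (m : ℤ) (j : ℕ) (x : ℝ) :
    HasDerivAt (fun y => bTerm m j y) (bDeriv m j x) x := by
  by_cases hc : 0 ≤ m + (j : ℤ)
  · simp only [bTerm, bDeriv, if_pos hc]
    exact (((hasDerivAt_id x).div_const 2).pow _).div_const _
  · simp only [bTerm, bDeriv, if_neg hc]
    exact hasDerivAt_const x 0

lemma aux_two_pow (a j : ℕ) : a + 2 * j ≤ (a + 2) * 2 ^ j := by
  induction j with
  | zero => simp
  | succ j ih =>
    have h1 : 2 ≤ (a + 2) * 2 ^ j :=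
      le_mul_of_le_of_one_le (by omega) Nat.one_le_two_pow
    calc a + 2 * (j + 1) = (a + 2 * j) + 2 := by ring
    _ ≤ (a + 2) * 2 ^ j + (a + 2) * 2 ^ j := by omega
    _ = (a + 2) * 2 ^ (j + 1) := by rw [pow_succ]; ring

noncomputable def bBound (m : ℤ) (R : ℝ) (j : ℕ) : ℝ :=
  (((m.natAbs : ℝ) + 2) * R ^ m.natAbs) * ((2 * R ^ 2) ^ j / (Nat.factorial j : ℝ))

lemma bBound_summable (m : ℤ) (R : ℝ) : Summable (bBound m R) :=
  (Real.summable_pow_div_factorial (2 * R ^ 2)).mul_left _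

lemma le_bBound_aux (m : ℤ) (j : ℕ) {R : ℝ} (hR : 1 ≤ R) :
    ((((m + 2 * (j : ℤ)).toNat : ℝ)) * R ^ (m.natAbs + 2 * j)) ≤
      (((m.natAbs : ℝ) + 2) * R ^ m.natAbs) * (2 * R ^ 2) ^ j := by
  have hR0 : (0:ℝ) ≤ R := by linarith
  have h1n : (m + 2 * (j : ℤ)).toNat ≤ (m.natAbs + 2) * 2 ^ j :=
    le_trans (by omega) (aux_two_pow m.natAbs j)
  calc ((m + 2 * (j : ℤ)).toNat : ℝ) * R ^ (m.natAbs + 2 * j)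
      ≤ ((((m.natAbs + 2) * 2 ^ j : ℕ)) : ℝ) * R ^ (m.natAbs + 2 * j) := by
        exact mul_le_mul_of_nonneg_right (by exact_mod_cast h1n) (by positivity)
    _ = (((m.natAbs : ℝ) + 2) * R ^ m.natAbs) * (2 * R ^ 2) ^ j := by
        push_cast
        rw [pow_add, mul_pow, pow_mul]
        ring

lemma le_bBound_aux' (m : ℤ) (j : ℕ) {R : ℝ} (hR : 1 ≤ R) :
    R ^ (m.natAbs + 2 * j) ≤ (((m.natAbs : ℝ) + 2) * R ^ m.natAbs) * (2 * R ^ 2) ^ j := by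
  have hR0 : (0:ℝ) ≤ R := by linarith
  have h2 : (1:ℝ) ≤ (m.natAbs : ℝ) + 2 := by
    have : (0:ℝ) ≤ (m.natAbs : ℝ) := Nat.cast_nonneg _
    linarith
  calc R ^ (m.natAbs + 2 * j) = R ^ m.natAbs * (R ^ 2) ^ j := by
        rw [pow_add, pow_mul]
  _ ≤ R ^ m.natAbs * (2 * R ^ 2) ^ j := by
        gcongr
        nlinarith
  _ = 1 * (R ^ m.natAbs * (2 * R ^ 2) ^ j) := (one_mul _).symm
  _ ≤ ((m.natAbs : ℝ) + 2) * (R ^ m.natAbs * (2 * R ^ 2) ^ j) := by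
        gcongr
  _ = (((m.natAbs : ℝ) + 2) * R ^ m.natAbs) * (2 * R ^ 2) ^ j := by ring

lemma half_abs_le {R x : ℝ} (hR : 1 ≤ R) (hx : |x| ≤ R) : |x / 2| ≤ R := by
  rw [abs_div, abs_two]
  linarith [abs_nonneg x]

lemma fac_one_le (n : ℕ) : (1:ℝ) ≤ (Nat.factorial n : ℝ) := by
  exact_mod_cast Nat.one_le_iff_ne_zero.mpr (Nat.factorial_ne_zero _)

lemma bDeriv_bound (m : ℤ) (j : ℕ) {R x : ℝ} (hR : 1 ≤ R) (hx : |x| ≤ R) :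
    ‖bDeriv m j x‖ ≤ bBound m R j := by
  have hR0 : (0:ℝ) < R := by linarith
  unfold bDeriv
  split
  · rw [Real.norm_eq_abs]
    have hpow : |x / 2| ^ ((m + 2 * (j : ℤ)).toNat - 1) ≤ R ^ (m.natAbs + 2 * j) := by
      calc |x / 2| ^ ((m + 2 * (j : ℤ)).toNat - 1) ≤ R ^ ((m + 2 * (j : ℤ)).toNat - 1) :=
            pow_le_pow_left₀ (abs_nonneg _) (half_abs_le hR hx) _
      _ ≤ R ^ (m.natAbs + 2 * j) := pow_le_pow_right₀ hR (by omega)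
    calc |((m + 2 * (j : ℤ)).toNat : ℝ) * (x / 2) ^ ((m + 2 * (j : ℤ)).toNat - 1) * (1 / 2) /
          ((Nat.factorial j : ℝ) * ((m + (j : ℤ)).toNat.factorial : ℝ))|
        = ((m + 2 * (j : ℤ)).toNat : ℝ) * |x / 2| ^ ((m + 2 * (j : ℤ)).toNat - 1) * (1 / 2) /
          ((Nat.factorial j : ℝ) * ((m + (j : ℤ)).toNat.factorial : ℝ)) := by
          rw [abs_div, abs_mul, abs_mul, abs_pow, Nat.abs_cast,
            abs_of_nonneg (by norm_num : (0:ℝ) ≤ 1/2),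
            abs_of_pos (by positivity : (0:ℝ) < (Nat.factorial j : ℝ) *
              ((m + (j : ℤ)).toNat.factorial : ℝ))]
      _ ≤ ((m + 2 * (j : ℤ)).toNat : ℝ) * R ^ (m.natAbs + 2 * j) * 1 /
          ((Nat.factorial j : ℝ) * 1) := by
          apply div_le_div₀ (by positivity)
          · exact mul_le_mul (mul_le_mul_of_nonneg_left hpow (Nat.cast_nonneg _))
              (by norm_num) (by norm_num) (by positivity)
          · positivity
          · exact mul_le_mul_of_nonneg_left (fac_one_le _) (by positivity)
      _ = ((m + 2 * (j : ℤ)).toNat : ℝ) * R ^ (m.natAbs + 2 * j) / (Nat.factorial j : ℝ) := by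
          ring
      _ ≤ ((((m.natAbs : ℝ) + 2) * R ^ m.natAbs) * (2 * R ^ 2) ^ j) / (Nat.factorial j : ℝ) :=
          (div_le_div_iff_of_pos_right (by positivity)).mpr (le_bBound_aux m j hR)
      _ = bBound m R j := by rw [bBound]; ring
  · rw [norm_zero, bBound]; positivity

lemma bTerm_bound (m : ℤ) (j : ℕ) {R x : ℝ} (hR : 1 ≤ R) (hx : |x| ≤ R) :
    ‖bTerm m j x‖ ≤ bBound m R j := by
  have hR0 : (0:ℝ) < R := by linarith
  unfold bTerm
  split
  · rw [Real.norm_eq_abs]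
    have hpow : |x / 2| ^ ((m + 2 * (j : ℤ)).toNat) ≤ R ^ (m.natAbs + 2 * j) := by
      calc |x / 2| ^ ((m + 2 * (j : ℤ)).toNat) ≤ R ^ ((m + 2 * (j : ℤ)).toNat) :=
            pow_le_pow_left₀ (abs_nonneg _) (half_abs_le hR hx) _
      _ ≤ R ^ (m.natAbs + 2 * j) := pow_le_pow_right₀ hR (by omega)
    calc |(x / 2) ^ (m + 2 * (j : ℤ)).toNat /
          ((Nat.factorial j : ℝ) * ((m + (j : ℤ)).toNat.factorial : ℝ))|
        = |x / 2| ^ (m + 2 * (j : ℤ)).toNat /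
          ((Nat.factorial j : ℝ) * ((m + (j : ℤ)).toNat.factorial : ℝ)) := by
          rw [abs_div, abs_pow, abs_of_pos (by positivity : (0:ℝ) < (Nat.factorial j : ℝ) *
              ((m + (j : ℤ)).toNat.factorial : ℝ))]
      _ ≤ R ^ (m.natAbs + 2 * j) / ((Nat.factorial j : ℝ) * 1) := by
          apply div_le_div₀ (by positivity) hpow (by positivity)
          exact mul_le_mul_of_nonneg_left (fac_one_le _) (by positivity)
      _ ≤ ((((m.natAbs : ℝ) + 2) * R ^ m.natAbs) * (2 * R ^ 2) ^ j) / (Nat.factorial j : ℝ) := by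
          rw [mul_one]
          exact (div_le_div_iff_of_pos_right (by positivity)).mpr (le_bBound_aux' m j hR)
      _ = bBound m R j := by rw [bBound]; ring
  · rw [norm_zero, bBound]; positivity

lemma bTerm_summable (m : ℤ) (x : ℝ) : Summable (fun j => bTerm m j x) := by
  apply Summable.of_norm_bounded (bBound_summable m (|x| + 1))
  intro j
  exact bTerm_bound m j (by linarith [abs_nonneg x]) (by linarith)

lemma bDeriv_eq (m : ℤ) (j : ℕ) (x : ℝ) :
    bDeriv m j x =
      (bTerm (m - 1) j x + (if j = 0 then 0 else bTerm (m + 1) (j - 1) x)) / 2 := by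
  unfold bDeriv bTerm
  rcases j with _ | jj
  · -- j = 0
    simp only [Nat.cast_zero, mul_zero, add_zero, reduceIte]
    rcases lt_trichotomy m 0 with hm | hm | hm
    · rw [if_neg (by omega), if_neg (by omega)]; norm_num
    · subst hm
      rw [if_pos (by omega), if_neg (by omega)]
      norm_num
    · -- m ≥ 1
      rw [if_pos (by omega), if_pos (by omega)]
      obtain ⟨q, hq⟩ : ∃ q, m.toNat = q + 1 := ⟨m.toNat - 1, by omega⟩
      have h1 : m.toNat = q + 1 := hq
      have h2 : (m - 1).toNat = q := by omega
      rw [h1, h2, Nat.factorial_succ]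
      have hfq : (0:ℝ) < (Nat.factorial q : ℝ) := by positivity
      field_simp
      push_cast
      ring
  · -- j = jj + 1
    simp only [if_neg (Nat.succ_ne_zero jj), Nat.succ_sub_one]
    rcases lt_trichotomy (m + (jj + 1 : ℕ)) 0 with hs | hs | hs
    · rw [if_neg (by push_cast at hs ⊢; omega), if_neg (by push_cast at hs ⊢; omega),
        if_neg (by push_cast at hs ⊢; omega)]
      norm_num
    · -- m + j = 0
      rw [if_pos (by push_cast at hs ⊢; omega), if_neg (by push_cast at hs ⊢; omega),
        if_pos (by push_cast at hs ⊢; omega)]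
      push_cast at hs
      have h1 : (m + 2 * ((jj + 1 : ℕ) : ℤ)).toNat = jj + 1 := by push_cast; omega
      have h2 : (m + ((jj + 1 : ℕ) : ℤ)).toNat = 0 := by push_cast; omega
      have h3 : (m + 1 + 2 * ((jj : ℕ) : ℤ)).toNat = jj := by push_cast; omega
      have h4 : (m + 1 + ((jj : ℕ) : ℤ)).toNat = 0 := by push_cast; omega
      rw [h1, h2, h3, h4, Nat.factorial_zero, Nat.factorial_succ]
      have hfj : (0:ℝ) < (Nat.factorial jj : ℝ) := by positivity
      field_simp
      push_cast
      ring
    · -- m + j ≥ 1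
      rw [if_pos (by push_cast at hs ⊢; omega), if_pos (by push_cast at hs ⊢; omega),
        if_pos (by push_cast at hs ⊢; omega)]
      push_cast at hs
      obtain ⟨q, hq⟩ : ∃ q, (m + ((jj + 1 : ℕ) : ℤ)).toNat = q + 1 :=
        ⟨(m + ((jj + 1 : ℕ) : ℤ)).toNat - 1, by push_cast; omega⟩
      push_cast at hq
      have h1 : (m + 2 * ((jj + 1 : ℕ) : ℤ)).toNat = q + 1 + (jj + 1) := by push_cast; omega
      have h2 : (m + ((jj + 1 : ℕ) : ℤ)).toNat = q + 1 := by push_cast; omega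
      have h3 : (m - 1 + 2 * ((jj + 1 : ℕ) : ℤ)).toNat = q + (jj + 1) := by push_cast; omega
      have h4 : (m - 1 + ((jj + 1 : ℕ) : ℤ)).toNat = q := by push_cast; omega
      have h5 : (m + 1 + 2 * ((jj : ℕ) : ℤ)).toNat = q + (jj + 1) := by push_cast; omega
      have h6 : (m + 1 + ((jj : ℕ) : ℤ)).toNat = q + 1 := by push_cast; omega
      rw [h1, h2, h3, h4, h5, h6]
      have he : q + 1 + (jj + 1) - 1 = q + (jj + 1) := by omega
      rw [he, Nat.factorial_succ q, Nat.factorial_succ jj]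
      have hfq : (0:ℝ) < (Nat.factorial q : ℝ) := by positivity
      have hfj : (0:ℝ) < (Nat.factorial jj : ℝ) := by positivity
      field_simp
      push_cast
      ring

lemma bShift_summable (m : ℤ) (x : ℝ) :
    Summable (fun j : ℕ => if j = 0 then 0 else bTerm (m + 1) (j - 1) x) := by
  rw [← summable_nat_add_iff 1]
  simpa using bTerm_summable (m + 1) x

lemma tsum_bShift (m : ℤ) (x : ℝ) :
    ∑' j : ℕ, (if j = 0 then 0 else bTerm (m + 1) (j - 1) x) = besselI (m + 1) x := by
  rw [(bShift_summable m x).tsum_eq_zero_add]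
  simp [besselI_eq]

lemma tsum_bDeriv (m : ℤ) (x : ℝ) :
    ∑' j, bDeriv m j x = (besselI (m - 1) x + besselI (m + 1) x) / 2 := by
  have h1 := bTerm_summable (m - 1) x
  have h2 := bShift_summable m x
  calc ∑' j, bDeriv m j x
      = ∑' j, (bTerm (m - 1) j x + (if j = 0 then 0 else bTerm (m + 1) (j - 1) x)) / 2 := by
        exact tsum_congr fun j => bDeriv_eq m j x
    _ = (∑' j, (bTerm (m - 1) j x + (if j = 0 then 0 else bTerm (m + 1) (j - 1) x))) / 2 := by
        exact tsum_div_const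
    _ = ((∑' j, bTerm (m - 1) j x) + ∑' j : ℕ, (if j = 0 then 0 else bTerm (m + 1) (j - 1) x)) / 2 := by
        rw [h1.tsum_add h2]
    _ = (besselI (m - 1) x + besselI (m + 1) x) / 2 := by
        rw [← besselI_eq, tsum_bShift]

lemma besselI_hasDerivAt (m : ℤ) (x : ℝ) :
    HasDerivAt (besselI m) ((besselI (m - 1) x + besselI (m + 1) x) / 2) x := by
  have hx : x ∈ Metric.ball (0:ℝ) (|x| + 1) := by
    simp [Real.dist_eq, abs_nonneg]
  have h0 : (0:ℝ) ∈ Metric.ball (0:ℝ) (|x| + 1) := by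
    simp; positivity
  have key : HasDerivAt (fun z => ∑' j, bTerm m j z) (∑' j, bDeriv m j x) x := by
    apply hasDerivAt_tsum_of_isPreconnected (bBound_summable m (|x| + 1))
      Metric.isOpen_ball (convex_ball (0:ℝ) (|x| + 1)).isPreconnected
      (fun j y _ => bTerm_hasDerivAt m j y) ?_ h0 (bTerm_summable m 0) hx
    intro j y hy
    rw [Metric.mem_ball, Real.dist_eq, sub_zero] at hy
    exact bDeriv_bound m j (by linarith [abs_nonneg x]) hy.le
  rw [tsum_bDeriv] at key
  exact key

lemma besselI_zero (m : ℤ) : besselI m 0 = if m = 0 then 1 else 0 := by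
  rw [besselI_eq]
  by_cases hm : m = 0
  · subst hm
    rw [if_pos rfl, tsum_eq_single 0]
    · simp [bTerm]
    · intro j hj
      simp only [bTerm]
      rw [if_pos (by omega), zero_div,
        zero_pow (by omega : ((0:ℤ) + 2 * (j:ℤ)).toNat ≠ 0)]
      simp
  · rw [if_neg hm]
    have hz : ∀ j : ℕ, bTerm m j 0 = 0 := by
      intro j
      simp only [bTerm]
      split
      · rw [zero_div, zero_pow (by omega : (m + 2 * (j:ℤ)).toNat ≠ 0)]
        simp
      · rfl
    simp [hz]

/-- The functions `p k n t = e^{-(λ+μ)t} (λ/μ)^{(n-k)/2} I_{n-k}(2t√(λμ))` solve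
the forward Kolmogorov equations of the bilateral birth-and-death process with
constant rates `λ, μ`, with the delta initial condition at `k`. -/
theorem constant_rates_transition_probabilities
    (lam mu : ℝ) (hlam : 0 < lam) (hmu : 0 < mu) (k : ℤ)
    (p : ℤ → ℝ → ℝ)
    (hp : ∀ (n : ℤ) (t : ℝ), 0 ≤ t →
      p n t = Real.exp (-(lam + mu) * t) * (lam / mu) ^ (((n - k : ℤ) : ℝ) / 2)
        * besselI (n - k) (2 * t * Real.sqrt (lam * mu))) :
    (∀ n : ℤ, ∀ t : ℝ, 0 ≤ t →
      HasDerivWithinAt (p n)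
        (lam * p (n - 1) t - (lam + mu) * p n t + mu * p (n + 1) t)
        (Set.Ici 0) t) ∧
    (∀ n : ℤ, p n 0 = if n = k then 1 else 0) := by
  have hlm : (0:ℝ) < lam * mu := mul_pos hlam hmu
  have hdiv : (0:ℝ) < lam / mu := div_pos hlam hmu
  set s : ℝ := Real.sqrt (lam * mu) with hs_def
  set c : ℤ → ℝ := fun m => (lam / mu) ^ ((m : ℝ) / 2) with hc_def
  have hc1 : ∀ m : ℤ, lam * c (m - 1) = c m * s := by
    intro m
    have e0 : (((m - 1 : ℤ)) : ℝ) / 2 = (m : ℝ) / 2 + (-(1/2)) := by push_cast; ring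
    have e1 : c (m - 1) = c m * (lam / mu) ^ (-(1/2) : ℝ) := by
      rw [hc_def]; simp only []
      rw [e0, Real.rpow_add hdiv]
    have e2 : (lam / mu : ℝ) ^ (-(1/2) : ℝ) = Real.sqrt (mu / lam) := by
      rw [Real.rpow_neg hdiv.le, ← Real.inv_rpow hdiv.le, ← Real.sqrt_eq_rpow]
      congr 1
      field_simp
    have e3 : lam * Real.sqrt (mu / lam) = Real.sqrt (lam * mu) := by
      have h4 : lam * Real.sqrt (mu / lam) = Real.sqrt (lam ^ 2 * (mu / lam)) := by
        rw [Real.sqrt_mul (sq_nonneg lam), Real.sqrt_sq hlam.le]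
      rw [h4]
      congr 1
      field_simp
    rw [e1, e2, hs_def, ← e3]
    ring
  have hc2 : ∀ m : ℤ, mu * c (m + 1) = c m * s := by
    intro m
    have e0 : (((m + 1 : ℤ)) : ℝ) / 2 = (m : ℝ) / 2 + (1/2) := by push_cast; ring
    have e1 : c (m + 1) = c m * (lam / mu) ^ ((1/2) : ℝ) := by
      rw [hc_def]; simp only []
      rw [e0, Real.rpow_add hdiv]
    have e2 : (lam / mu : ℝ) ^ ((1/2) : ℝ) = Real.sqrt (lam / mu) := by
      rw [Real.sqrt_eq_rpow]
    have e3 : mu * Real.sqrt (lam / mu) = Real.sqrt (lam * mu) := by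
      have h4 : mu * Real.sqrt (lam / mu) = Real.sqrt (mu ^ 2 * (lam / mu)) := by
        rw [Real.sqrt_mul (sq_nonneg mu), Real.sqrt_sq hmu.le]
      rw [h4]
      congr 1
      field_simp
    rw [e1, e2, hs_def, ← e3]
    ring
  constructor
  · intro n t ht
    set m : ℤ := n - k with hm_def
    set q : ℝ → ℝ := fun u => Real.exp (-(lam + mu) * u) * (lam / mu) ^ (((n - k : ℤ) : ℝ) / 2)
      * besselI (n - k) (2 * u * Real.sqrt (lam * mu)) with hq_def
    have hE : HasDerivAt (fun u : ℝ => Real.exp (-(lam + mu) * u))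
        (Real.exp (-(lam + mu) * t) * -(lam + mu)) t := by
      simpa using ((hasDerivAt_id t).const_mul (-(lam + mu))).exp
    have hin : HasDerivAt (fun u : ℝ => 2 * u * Real.sqrt (lam * mu))
        (2 * Real.sqrt (lam * mu)) t := by
      simpa using ((hasDerivAt_id t).const_mul 2).mul_const (Real.sqrt (lam * mu))
    have hB : HasDerivAt (fun u : ℝ => besselI (n - k) (2 * u * Real.sqrt (lam * mu)))
        (((besselI (n - k - 1) (2 * t * Real.sqrt (lam * mu))
          + besselI (n - k + 1) (2 * t * Real.sqrt (lam * mu))) / 2)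
          * (2 * Real.sqrt (lam * mu))) t :=
      by have := (besselI_hasDerivAt (n - k) (2 * t * Real.sqrt (lam * mu))).comp t hin; exact this
    have hq : HasDerivAt q
        ((Real.exp (-(lam + mu) * t) * -(lam + mu)) * ((lam / mu) ^ (((n - k : ℤ) : ℝ) / 2))
          * besselI (n - k) (2 * t * Real.sqrt (lam * mu))
        + (Real.exp (-(lam + mu) * t) * ((lam / mu) ^ (((n - k : ℤ) : ℝ) / 2)))
          * (((besselI (n - k - 1) (2 * t * Real.sqrt (lam * mu))
            + besselI (n - k + 1) (2 * t * Real.sqrt (lam * mu))) / 2)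
            * (2 * Real.sqrt (lam * mu)))) t := by
      exact (hE.mul_const _).mul hB
    have hval : (Real.exp (-(lam + mu) * t) * -(lam + mu)) * ((lam / mu) ^ (((n - k : ℤ) : ℝ) / 2))
          * besselI (n - k) (2 * t * Real.sqrt (lam * mu))
        + (Real.exp (-(lam + mu) * t) * ((lam / mu) ^ (((n - k : ℤ) : ℝ) / 2)))
          * (((besselI (n - k - 1) (2 * t * Real.sqrt (lam * mu))
            + besselI (n - k + 1) (2 * t * Real.sqrt (lam * mu))) / 2)
            * (2 * Real.sqrt (lam * mu)))
        = lam * p (n - 1) t - (lam + mu) * p n t + mu * p (n + 1) t := by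
      rw [hp (n - 1) t ht, hp n t ht, hp (n + 1) t ht]
      have e1 : n - 1 - k = n - k - 1 := by ring
      have e2 : n + 1 - k = n - k + 1 := by ring
      rw [e1, e2]
      have h1 := hc1 (n - k)
      have h2 := hc2 (n - k)
      simp only [hc_def, hs_def] at h1 h2
      push_cast at h1 h2 ⊢
      set E := Real.exp (-(lam + mu) * t)
      set B0 := besselI (n - k) (2 * t * Real.sqrt (lam * mu))
      set Bm := besselI (n - k - 1) (2 * t * Real.sqrt (lam * mu))
      set Bp := besselI (n - k + 1) (2 * t * Real.sqrt (lam * mu))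
      linear_combination (-(E * Bm)) * h1 + (-(E * Bp)) * h2
    rw [hval] at hq
    apply (hq.hasDerivWithinAt).congr
    · intro y hy
      exact hp n y hy
    · exact hp n t ht
  · intro n
    rw [hp n 0 le_rfl]
    by_cases hn : n = k
    · subst hn
      rw [if_pos rfl]
      simp [besselI_zero]
    · rw [if_neg hn]
      have : n - k ≠ 0 := sub_ne_zero.mpr hn
      simp [besselI_zero, this]
end

section
/- Let λ > 0 and μ > 0 be real numbers with λ ≠ μ, let β > 0, set c = μ/λ, and fix k ∈ ℤ. Define p̃_{k,n}(t) = ((1 + β·cⁿ)/(1 + β·cᵏ)) · e^{−(λ+μ)t} · c^{(k−n)/2} · I_{n−k}(2t√(λμ)) for n ∈ ℤ and t ≥ 0, where c^{(k−n)/2} denotes the real power and I_m is the modified Bessel function of the first kind of integer order. Then for every n ∈ ℤ the function t ↦ p̃_{k,n}(t) is differentiable on [0, ∞) and satisfies the forward Kolmogorov equations d/dt p̃_{k,n}(t) = λ̃_{n−1}·p̃_{k,n−1}(t) − (λ̃ₙ + μ̃ₙ)·p̃_{k,n}(t) + μ̃_{n+1}·p̃_{k,n+1}(t) with rates λ̃ₙ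 = λ·(1 + β·c^{n+1})/(1 + β·cⁿ) and μ̃ₙ = μ·(1 + β·c^{n−1})/(1 + β·cⁿ), together with the initial conditions p̃_{k,n}(0) = 1 if n = k and p̃_{k,n}(0) = 0 if n ≠ k. -/
noncomputable def bterm (m : ℤ) (j : ℕ) (x : ℝ) : ℝ :=
  if 0 ≤ m + (j : ℤ) then
      (x / 2) ^ (m + 2 * (j : ℤ)).toNat /
        ((Nat.factorial j : ℝ) * (Nat.factorial (m + (j : ℤ)).toNat : ℝ))
    else 0

noncomputable def bterm' (m : ℤ) (j : ℕ) (x : ℝ) : ℝ :=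
  if 0 ≤ m + (j : ℤ) then
      (((m + 2 * (j : ℤ)).toNat : ℝ) * (x / 2) ^ ((m + 2 * (j : ℤ)).toNat - 1) * (1 / 2)) /
        ((Nat.factorial j : ℝ) * (Nat.factorial (m + (j : ℤ)).toNat : ℝ))
    else 0

lemma besselI_eq_tsum (m : ℤ) (x : ℝ) : besselI m x = ∑' j, bterm m j x := rfl

lemma abs_bterm_le (m : ℤ) (j : ℕ) {x M : ℝ} (hM : 1 ≤ M) (hx : |x| ≤ 2 * M) :
    |bterm m j x| ≤ M ^ m.toNat * (M ^ 2) ^ j / (Nat.factorial j : ℝ) := by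
  have hM0 : (0:ℝ) ≤ M := le_trans zero_le_one hM
  have hfj : (0:ℝ) < (Nat.factorial j : ℝ) := Nat.cast_pos.mpr (Nat.factorial_pos j)
  unfold bterm
  split_ifs with h
  · rw [abs_div]
    have h1 : |x / 2| ^ (m + 2 * (j : ℤ)).toNat ≤ M ^ m.toNat * (M ^ 2) ^ j := by
      calc |x / 2| ^ (m + 2 * (j : ℤ)).toNat ≤ M ^ (m + 2 * (j : ℤ)).toNat :=
            pow_le_pow_left₀ (abs_nonneg _) (by rw [abs_div, abs_two]; linarith) _
        _ ≤ M ^ (m.toNat + 2 * j) := pow_le_pow_right₀ hM (by omega)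
        _ = M ^ m.toNat * (M ^ 2) ^ j := by rw [pow_add, ← pow_mul]
    have h2 : (Nat.factorial j : ℝ) ≤ |(Nat.factorial j : ℝ) * (Nat.factorial (m + (j : ℤ)).toNat : ℝ)| := by
      rw [abs_of_nonneg (by positivity)]
      nlinarith [(Nat.one_le_cast (α := ℝ)).mpr (Nat.factorial_pos (m + (j : ℤ)).toNat)]
    exact div_le_div₀ (by positivity) (by rw [abs_pow]; exact h1) hfj h2
  · simp only [abs_zero]; positivity

lemma summable_aux (C r : ℝ) : Summable (fun j : ℕ => C * r ^ j / (Nat.factorial j : ℝ)) := by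
  simpa [mul_div_assoc] using (Real.summable_pow_div_factorial r).mul_left C

lemma summable_bterm (m : ℤ) (x : ℝ) : Summable (fun j => bterm m j x) := by
  set M : ℝ := max 1 (|x| / 2) with hMdef
  have hM : 1 ≤ M := le_max_left _ _
  have hx : |x| ≤ 2 * M := by
    have : |x| / 2 ≤ M := le_max_right _ _
    linarith
  apply Summable.of_norm_bounded (summable_aux (M ^ m.toNat) (M ^ 2))
  intro j
  simpa [Real.norm_eq_abs, mul_div_assoc] using abs_bterm_le m j hM hx

lemma hasDerivAt_bterm (m : ℤ) (j : ℕ) (x : ℝ) :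
    HasDerivAt (fun y => bterm m j y) (bterm' m j x) x := by
  unfold bterm bterm'
  split_ifs with h
  · exact (((hasDerivAt_id x).div_const 2).pow _).div_const _
  · exact hasDerivAt_const x 0

lemma abs_bterm'_le (m : ℤ) (j : ℕ) {x M : ℝ} (hM : 1 ≤ M) (hx : |x| ≤ 2 * M) :
    |bterm' m j x| ≤ (2*M) ^ m.toNat * ((2*M) ^ 2) ^ j / (Nat.factorial j : ℝ) := by
  have hM0 : (0:ℝ) < M := lt_of_lt_of_le zero_lt_one hM
  have hfj : (0:ℝ) < (Nat.factorial j : ℝ) := Nat.cast_pos.mpr (Nat.factorial_pos j)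
  unfold bterm'
  split_ifs with h
  · set N := (m + 2 * (j : ℤ)).toNat with hN
    rw [abs_div]
    have hb1 : |x / 2| ^ (N - 1) ≤ M ^ (m.toNat + 2 * j) := by
      calc |x / 2| ^ (N - 1) ≤ M ^ (N - 1) :=
            pow_le_pow_left₀ (abs_nonneg _) (by rw [abs_div, abs_two]; linarith) _
        _ ≤ M ^ (m.toNat + 2 * j) := pow_le_pow_right₀ hM (by omega)
    have hb2 : (N : ℝ) ≤ 2 ^ (m.toNat + 2 * j) := by
      have : N < 2 ^ (m.toNat + 2 * j) :=
        lt_of_le_of_lt (by omega) (Nat.lt_two_pow_self)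
      exact_mod_cast this.le
    have hnum : |(N : ℝ) * (x / 2) ^ (N - 1) * (1 / 2)|
        ≤ (2*M) ^ m.toNat * ((2*M) ^ 2) ^ j := by
      have h2M : (2*M) ^ m.toNat * ((2*M) ^ 2) ^ j = 2 ^ (m.toNat + 2*j) * M ^ (m.toNat + 2*j) := by
        rw [← pow_mul, ← pow_add, mul_pow]
      have hNa : |(N:ℝ)| = (N:ℝ) := abs_of_nonneg (Nat.cast_nonneg _)
      have e : |(N : ℝ) * (x / 2) ^ (N - 1) * (1 / 2)|
          = (N:ℝ) * |x / 2| ^ (N - 1) * (1 / 2) := by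
        rw [abs_mul, abs_mul, abs_pow, hNa]; norm_num
      have step1 : (N:ℝ) * |x / 2| ^ (N - 1) ≤ 2 ^ (m.toNat + 2*j) * M ^ (m.toNat + 2*j) :=
        mul_le_mul hb2 hb1 (by positivity) (by positivity)
      have hRnn : (0:ℝ) ≤ 2 ^ (m.toNat + 2*j) * M ^ (m.toNat + 2*j) := by positivity
      rw [e, h2M]; linarith
    have h2 : (Nat.factorial j : ℝ) ≤ |(Nat.factorial j : ℝ) * (Nat.factorial (m + (j : ℤ)).toNat : ℝ)| := by
      rw [abs_of_nonneg (by positivity)]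
      nlinarith [(Nat.one_le_cast (α := ℝ)).mpr (Nat.factorial_pos (m + (j : ℤ)).toNat)]
    exact div_le_div₀ (by positivity) hnum hfj h2
  · simp only [abs_zero]; positivity

lemma hasDerivAt_besselI_tsum (m : ℤ) (x : ℝ) :
    HasDerivAt (besselI m) (∑' j, bterm' m j x) x := by
  have h : besselI m = fun z => ∑' j, bterm m j z := funext fun z => besselI_eq_tsum m z
  rw [h]
  set R : ℝ := |x| + 1 with hR
  have hRpos : 0 < R := by positivity
  set M : ℝ := max 1 (R / 2) with hMdef
  have hM : 1 ≤ M := le_max_left _ _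
  refine hasDerivAt_tsum_of_isPreconnected
    (u := fun j => (2*M) ^ m.toNat * ((2*M) ^ 2) ^ j / (Nat.factorial j : ℝ))
    (summable_aux _ _) Metric.isOpen_ball ((convex_ball (0:ℝ) R).isPreconnected)
    (fun j y _ => hasDerivAt_bterm m j y)
    (fun j y hy => ?_) ?_ (summable_bterm m 0) ?_
  · have hyR : |y| < R := by simpa [Real.dist_eq] using hy
    have hy2 : |y| ≤ 2 * M := by
      have : R / 2 ≤ M := le_max_right _ _
      linarith
    simpa [Real.norm_eq_abs] using abs_bterm'_le m j hM hy2
  · simpa [Real.dist_eq] using hRpos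
  · simp [Real.dist_eq, hR]

lemma bterm'_eq (m : ℤ) (j : ℕ) (x : ℝ) :
    bterm' m j x =
      (bterm (m-1) j x + (if j = 0 then (0:ℝ) else bterm (m+1) (j-1) x)) / 2 := by
  unfold bterm bterm'
  by_cases h : 0 ≤ m + (j:ℤ)
  · rw [if_pos h]
    obtain ⟨K, hK⟩ : ∃ K : ℕ, m + (j:ℤ) = (K:ℤ) := ⟨(m+(j:ℤ)).toNat, by omega⟩
    have eN : (m + 2*(j:ℤ)).toNat = K + j := by omega
    have eK : (m + (j:ℤ)).toNat = K := by omega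
    rw [eN, eK]
    by_cases hK1 : 1 ≤ K
    · obtain ⟨K', rfl⟩ : ∃ K', K = K' + 1 := ⟨K - 1, by omega⟩
      rw [if_pos (show (0:ℤ) ≤ m - 1 + (j:ℤ) by omega)]
      have e1 : (m - 1 + 2*(j:ℤ)).toNat = K' + j := by omega
      have e2 : (m - 1 + (j:ℤ)).toNat = K' := by omega
      rw [e1, e2]
      cases j with
      | zero =>
        rw [if_pos rfl]
        have hfK : ((K':ℕ).factorial : ℝ) ≠ 0 := Nat.cast_ne_zero.mpr (Nat.factorial_ne_zero _)
        simp only [Nat.add_zero, Nat.factorial_succ, Nat.factorial_zero, Nat.add_sub_cancel]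
        push_cast
        field_simp
        ring
      | succ s =>
        rw [if_neg (Nat.succ_ne_zero s), Nat.succ_sub_one]
        rw [if_pos (show (0:ℤ) ≤ m + 1 + (s:ℤ) by omega)]
        have e3 : (m + 1 + 2*(s:ℤ)).toNat = K' + 1 + s := by omega
        have e4 : (m + 1 + (s:ℤ)).toNat = K' + 1 := by omega
        rw [e3, e4]
        have hfK : ((K':ℕ).factorial : ℝ) ≠ 0 := Nat.cast_ne_zero.mpr (Nat.factorial_ne_zero _)
        have hfs : ((s:ℕ).factorial : ℝ) ≠ 0 := Nat.cast_ne_zero.mpr (Nat.factorial_ne_zero _)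
        have hexp1 : K' + 1 + (s+1) - 1 = K' + 1 + s := by omega
        rw [hexp1]
        rw [Nat.factorial_succ (K'), Nat.factorial_succ s]
        push_cast
        field_simp
        ring
    · obtain rfl : K = 0 := by omega
      rw [if_neg (show ¬ (0:ℤ) ≤ m - 1 + (j:ℤ) by omega)]
      cases j with
      | zero =>
        rw [if_pos rfl]
        norm_num
      | succ s =>
        rw [if_neg (Nat.succ_ne_zero s), Nat.succ_sub_one]
        rw [if_pos (show (0:ℤ) ≤ m + 1 + (s:ℤ) by omega)]
        have e3 : (m + 1 + 2*(s:ℤ)).toNat = s := by omega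
        have e4 : (m + 1 + (s:ℤ)).toNat = 0 := by omega
        rw [e3, e4]
        have hfs : ((s:ℕ).factorial : ℝ) ≠ 0 := Nat.cast_ne_zero.mpr (Nat.factorial_ne_zero _)
        have hexp1 : 0 + (s+1) - 1 = s := by omega
        rw [hexp1]
        rw [Nat.factorial_succ s, Nat.factorial_zero]
        push_cast
        field_simp
        ring
  · rw [if_neg h, if_neg (show ¬ (0:ℤ) ≤ m - 1 + (j:ℤ) by omega)]
    cases j with
    | zero => norm_num
    | succ s =>
      rw [if_neg (Nat.succ_ne_zero s), Nat.succ_sub_one]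
      rw [if_neg (show ¬ (0:ℤ) ≤ m + 1 + (s:ℤ) by omega)]
      norm_num

lemma tsum_bterm' (m : ℤ) (x : ℝ) :
    ∑' j, bterm' m j x = (besselI (m-1) x + besselI (m+1) x) / 2 := by
  have hB : Summable (fun j : ℕ => (if j = 0 then (0:ℝ) else bterm (m+1) (j-1) x)) := by
    apply (summable_nat_add_iff 1).mp
    simpa using summable_bterm (m+1) x
  have hA := summable_bterm (m-1) x
  calc ∑' j, bterm' m j x
      = ∑' j : ℕ, (bterm (m-1) j x + (if j = 0 then (0:ℝ) else bterm (m+1) (j-1) x)) / 2 :=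
        tsum_congr fun j => bterm'_eq m j x
    _ = (∑' j : ℕ, (bterm (m-1) j x + (if j = 0 then (0:ℝ) else bterm (m+1) (j-1) x))) / 2 :=
        tsum_div_const
    _ = ((∑' j, bterm (m-1) j x) + ∑' j : ℕ, (if j = 0 then (0:ℝ) else bterm (m+1) (j-1) x)) / 2 := by
        rw [hA.tsum_add hB]
    _ = (besselI (m-1) x + besselI (m+1) x) / 2 := by
        rw [hB.tsum_eq_zero_add]
        simp [besselI_eq_tsum]

lemma hasDerivAt_besselI (m : ℤ) (x : ℝ) :
    HasDerivAt (besselI m) ((besselI (m-1) x + besselI (m+1) x) / 2) x := by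
  have := hasDerivAt_besselI_tsum m x
  rwa [tsum_bterm'] at this

lemma bterm_zero (m : ℤ) (j : ℕ) : bterm m j 0 = if m = 0 ∧ j = 0 then 1 else 0 := by
  unfold bterm
  by_cases h : 0 ≤ m + (j:ℤ)
  · rw [if_pos h]
    by_cases hN : (m + 2*(j:ℤ)).toNat = 0
    · have hm : m = 0 ∧ j = 0 := by omega
      obtain ⟨rfl, rfl⟩ := hm
      norm_num
    · rw [if_neg (show ¬ (m = 0 ∧ j = 0) by rintro ⟨rfl, rfl⟩; omega)]
      rw [show (0:ℝ)/2 = 0 by norm_num, zero_pow hN, zero_div]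
  · rw [if_neg h, if_neg (show ¬ (m = 0 ∧ j = 0) by rintro ⟨rfl, rfl⟩; omega)]

/-- The transformed transition probabilities
`p̃ k n t = ((1 + β cⁿ)/(1 + β cᵏ)) e^{-(λ+μ)t} c^{(k-n)/2} I_{n-k}(2t√(λμ))`,
with `c = μ/λ`, solve the forward Kolmogorov equations with rates
`λ̃ n = λ (1 + β c^{n+1})/(1 + β cⁿ)` and `μ̃ n = μ (1 + β c^{n-1})/(1 + β cⁿ)`,
with the delta initial condition at `k`. -/
theorem transformed_constant_rates_transition_probabilities
    (lam mu : ℝ) (hlam : 0 < lam) (hmu : 0 < mu) (hne : lam ≠ mu)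
    (β : ℝ) (hβ : 0 < β)
    (c : ℝ) (hc : c = mu / lam) (k : ℤ)
    (pt : ℤ → ℝ → ℝ)
    (hpt : ∀ (n : ℤ) (t : ℝ), 0 ≤ t →
      pt n t = (1 + β * c ^ n) / (1 + β * c ^ k)
        * Real.exp (-(lam + mu) * t) * c ^ (((k - n : ℤ) : ℝ) / 2)
        * besselI (n - k) (2 * t * Real.sqrt (lam * mu))) :
    (∀ n : ℤ, ∀ t : ℝ, 0 ≤ t →
      HasDerivWithinAt (pt n)
        ((lam * (1 + β * c ^ (n - 1 + 1)) / (1 + β * c ^ (n - 1))) * pt (n - 1) t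
          - (lam * (1 + β * c ^ (n + 1)) / (1 + β * c ^ n)
              + mu * (1 + β * c ^ (n - 1)) / (1 + β * c ^ n)) * pt n t
          + (mu * (1 + β * c ^ (n + 1 - 1)) / (1 + β * c ^ (n + 1))) * pt (n + 1) t)
        (Set.Ici 0) t) ∧
    (∀ n : ℤ, pt n 0 = if n = k then 1 else 0) := by
  have hc0 : 0 < c := by rw [hc]; positivity
  have hcne : c ≠ 0 := ne_of_gt hc0
  set s : ℝ := Real.sqrt (lam * mu) with hs
  have hspos : 0 < s := Real.sqrt_pos.mpr (by positivity)
  set w : ℝ := c ^ ((1:ℝ)/2) with hwdef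
  have hwpos : 0 < w := Real.rpow_pos_of_pos hc0 _
  have hw2 : w * w = c := by
    rw [hwdef, ← Real.rpow_add hc0]
    norm_num
  have hs2 : s * s = lam * mu := Real.mul_self_sqrt (by positivity)
  have hlw : lam * w = s := by
    have h1 : (lam * w) * (lam * w) = s * s := by
      rw [hs2]
      have : lam * w * (lam * w) = lam * lam * (w * w) := by ring
      rw [this, hw2, hc]
      field_simp
    nlinarith [mul_pos hlam hwpos, hspos]
  have hsw : s * w = mu := by
    have h1 : (s * w) * (s * w) = mu * mu := by
      have : s * w * (s * w) = (s * s) * (w * w) := by ring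
      rw [this, hw2, hs2, hc]
      field_simp
    nlinarith [mul_pos hspos hwpos, hmu]
  have hwne : w ≠ 0 := ne_of_gt hwpos
  have hden : ∀ z : ℤ, 0 < 1 + β * c ^ z := fun z => by positivity
  have hdenne : ∀ z : ℤ, (1 + β * c ^ z) ≠ 0 := fun z => ne_of_gt (hden z)
  constructor
  · intro n t ht
    rw [hpt (n-1) t ht, hpt n t ht, hpt (n+1) t ht]
    have e1 : n - 1 + 1 = n := by ring
    have e2 : n + 1 - 1 = n := by ring
    have e3 : n - 1 - k = n - k - 1 := by ring
    have e4 : n + 1 - k = n - k + 1 := by ring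
    rw [e1, e2, e3, e4]
    refine HasDerivWithinAt.congr
      (f := fun τ => (1 + β * c ^ n) / (1 + β * c ^ k)
        * Real.exp (-(lam + mu) * τ) * c ^ (((k - n : ℤ) : ℝ) / 2)
        * besselI (n - k) (2 * τ * s)) ?_
      (fun y hy => hpt n y hy) (hpt n t ht)
    apply HasDerivAt.hasDerivWithinAt
    -- build the derivative
    have hE : HasDerivAt (fun τ : ℝ => Real.exp (-(lam + mu) * τ))
        (Real.exp (-(lam + mu) * t) * (-(lam + mu))) t := by
      have := (((hasDerivAt_id t).const_mul (-(lam + mu)))).exp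
      simpa using this
    have hlin : HasDerivAt (fun τ : ℝ => 2 * τ * s) (2 * s) t := by
      have := ((hasDerivAt_id t).const_mul 2).mul_const s
      simpa using this
    have hI : HasDerivAt (fun τ : ℝ => besselI (n - k) (2 * τ * s))
        ((besselI (n - k - 1) (2 * t * s) + besselI (n - k + 1) (2 * t * s)) / 2 * (2 * s)) t := by
      have := (hasDerivAt_besselI (n - k) (2 * t * s)).comp t hlin
      exact this
    have hg := ((hE.const_mul ((1 + β * c ^ n) / (1 + β * c ^ k))).mul_const
        (c ^ (((k - n : ℤ) : ℝ) / 2))).mul hI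
    refine hg.congr_deriv (Eq.symm ?_)
    -- now the algebraic identity
    set E := Real.exp (-(lam + mu) * t) with hE'
    set I0 := besselI (n - k) (2 * t * s) with hI0
    set Im := besselI (n - k - 1) (2 * t * s) with hIm
    set Ip := besselI (n - k + 1) (2 * t * s) with hIp
    set Pn := c ^ (((k - n : ℤ) : ℝ) / 2) with hPn
    set Pm := c ^ (((k - (n-1) : ℤ) : ℝ) / 2) with hPm
    set Pp := c ^ (((k - (n+1) : ℤ) : ℝ) / 2) with hPp
    have hPmPn : Pm = Pn * w := by
      rw [hPm, hPn, hwdef, ← Real.rpow_add hc0]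
      congr 1
      push_cast
      ring
    have hPpPn : Pp = Pn / w := by
      rw [eq_div_iff hwne, hPp, hPn, hwdef, ← Real.rpow_add hc0]
      congr 1
      push_cast
      ring
    have hlam2 : lam = s / w := by rw [← hlw]; field_simp
    have hmu2 : mu = s * w := hsw.symm
    have hcp : c ^ (n+1) = c ^ n * (w * w) := by
      rw [hw2, zpow_add_one₀ hcne]
    have hcm : c ^ (n-1) = c ^ n / (w * w) := by
      rw [hw2, zpow_sub_one₀ hcne]
      ring
    rw [hPmPn, hPpPn, hcp, hcm, hlam2, hmu2]
    have h1 : (1 + β * c ^ k) ≠ 0 := hdenne k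
    have h2 : (1 + β * (c ^ n / (w * w))) ≠ 0 := by
      rw [← hcm]; exact hdenne (n-1)
    have h3 : (1 + β * c ^ n) ≠ 0 := hdenne n
    have h4 : (1 + β * (c ^ n * (w * w))) ≠ 0 := by
      rw [← hcp]; exact hdenne (n+1)
    field_simp
    ring
  · intro n
    rw [hpt n 0 le_rfl]
    by_cases hn : n = k
    · subst hn
      rw [if_pos rfl]
      simp [besselI_zero]
      exact hdenne _
    · rw [if_neg hn]
      have : n - k ≠ 0 := fun h => hn (by omega)
      simp [besselI_zero, this]
end
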